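/- Let G be a finite weighted graph with symmetric nonnegative conductances c_{xy} whose skeleton is connected, and let x be a vertex with ∑_{w≠x} c_{xw} > 0. Define the reduced graph G_x on V \ {x} with conductances c̃_{yz} = c_{yz} + c_{xy}c_{xz}/∑_{w≠x} c_{xw}. Then the spectral gap of the random walk on G_x is at least the spectral gap of the random walk on G: λ₁^{RW}(G_x) ≥ λ₁^{RW}(G). -/

import Mathlib

open Finset

/-- The random walk generator on a finite weighted graph. -/
def rwGen {V : Type*} [Fintype V] [DecidableEq V] (c : V → V → ℝ) (g : V → ℝ) (z : V) : ℝ :=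
  ∑ y ∈ univ.erase z, c z y * (g y - g z)

/-- `lam` is an eigenvalue of `-L` for the random walk with conductances `c`. -/
def rwEig {V : Type*} [Fintype V] [DecidableEq V] (c : V → V → ℝ) (lam : ℝ) : Prop :=
  ∃ g : V → ℝ, g ≠ 0 ∧ ∀ z, -(rwGen c g z) = lam * g z

namespace RedNet
variable {V : Type*} [Fintype V] [DecidableEq V]

/-- The negative generator `-L`. -/
def negGen (c : V → V → ℝ) (f : V → ℝ) (z : V) : ℝ :=
  ∑ y ∈ univ.erase z, c z y * (f z - f y)

lemma negGen_eq_neg_rwGen (c : V → V → ℝ) (f : V → ℝ) (z : V) :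
    negGen c f z = -(rwGen c f z) := by
  rw [negGen, rwGen, ← Finset.sum_neg_distrib]
  apply Finset.sum_congr rfl; intro y _; ring

lemma sum_erase_eq (F : V → ℝ) (z : V) :
    ∑ y ∈ univ.erase z, F y = ∑ y, (if y = z then 0 else F y) := by
  rw [Finset.sum_ite, Finset.sum_const_zero, zero_add]
  apply Finset.sum_congr
  · ext y; simp [Finset.mem_erase, Finset.mem_filter]
  · intros; rfl

lemma sum_erase_swap (F : V → V → ℝ) :
    ∑ z, ∑ y ∈ univ.erase z, F z y = ∑ z, ∑ y ∈ univ.erase z, F y z := by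
  simp_rw [sum_erase_eq]
  rw [Finset.sum_comm]
  apply Finset.sum_congr rfl; intro z _
  apply Finset.sum_congr rfl; intro y _
  simp [eq_comm]

lemma quadform (c : V → V → ℝ) (hsymm : ∀ y z, c y z = c z y) (f : V → ℝ) :
    2 * ∑ z, f z * negGen c f z = ∑ z, ∑ y ∈ univ.erase z, c z y * (f z - f y)^2 := by
  have key : ∑ z, ∑ y ∈ univ.erase z, c z y * (f z - f y) * f y
      = - ∑ z, ∑ y ∈ univ.erase z, c z y * (f z - f y) * f z := by
    rw [sum_erase_swap (fun z y => c z y * (f z - f y) * f y)]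
    rw [← Finset.sum_neg_distrib]
    apply Finset.sum_congr rfl; intro z _
    rw [← Finset.sum_neg_distrib]
    apply Finset.sum_congr rfl; intro y _
    rw [hsymm y z]; ring
  have lhs : ∑ z, f z * negGen c f z
      = ∑ z, ∑ y ∈ univ.erase z, c z y * (f z - f y) * f z := by
    apply Finset.sum_congr rfl; intro z _
    rw [negGen, Finset.mul_sum]
    apply Finset.sum_congr rfl; intro y _; ring
  rw [lhs]
  have : ∀ z, ∑ y ∈ univ.erase z, c z y * (f z - f y)^2
      = ∑ y ∈ univ.erase z, (c z y * (f z - f y) * f z - c z y * (f z - f y) * f y) := by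
    intro z; apply Finset.sum_congr rfl; intro y _; ring
  simp_rw [this, Finset.sum_sub_distrib]
  rw [key]; ring

lemma quadform_nonneg (c : V → V → ℝ) (hsymm : ∀ y z, c y z = c z y)
    (hnonneg : ∀ y z, 0 ≤ c y z) (f : V → ℝ) :
    0 ≤ ∑ z, f z * negGen c f z := by
  have h2 := quadform c hsymm f
  nlinarith [Finset.sum_nonneg (fun z (_ : z ∈ (univ : Finset V)) =>
    Finset.sum_nonneg (fun y (_ : y ∈ univ.erase z) =>
      mul_nonneg (hnonneg z y) (sq_nonneg (f z - f y))))]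

lemma bilin_symm (c : V → V → ℝ) (hsymm : ∀ y z, c y z = c z y) (f g : V → ℝ) :
    ∑ z, negGen c f z * g z = ∑ z, f z * negGen c g z := by
  have l1 : ∑ z, negGen c f z * g z
      = ∑ z, ∑ y ∈ univ.erase z, (c z y * f z * g z - c z y * f y * g z) := by
    apply Finset.sum_congr rfl; intro z _
    rw [negGen, Finset.sum_mul]
    apply Finset.sum_congr rfl; intro y _; ring
  have l2 : ∑ z, f z * negGen c g z
      = ∑ z, ∑ y ∈ univ.erase z, (c z y * f z * g z - c z y * f z * g y) := by
    apply Finset.sum_congr rfl; intro z _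
    rw [negGen, Finset.mul_sum]
    apply Finset.sum_congr rfl; intro y _; ring
  rw [l1, l2]
  simp_rw [Finset.sum_sub_distrib]
  rw [sum_erase_swap (fun z y => c z y * f y * g z)]
  congr 1
  apply Finset.sum_congr rfl; intro z _
  apply Finset.sum_congr rfl; intro y _
  rw [hsymm y z]

lemma kernel_const (c : V → V → ℝ) (hsymm : ∀ y z, c y z = c z y)
    (hnonneg : ∀ y z, 0 ≤ c y z)
    (hconn : (SimpleGraph.fromRel (fun y z => 0 < c y z)).Connected)
    (f : V → ℝ) (hf : ∀ z, negGen c f z = 0) : ∀ y z, f y = f z := by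
  have hq : ∑ z, ∑ y ∈ univ.erase z, c z y * (f z - f y)^2 = 0 := by
    rw [← quadform c hsymm f]
    have : ∑ z, f z * negGen c f z = 0 := by
      apply Finset.sum_eq_zero; intro z _; rw [hf z, mul_zero]
    rw [this, mul_zero]
  have hterm : ∀ z, ∀ y ∈ univ.erase z, c z y * (f z - f y)^2 = 0 := by
    intro z y hy
    have h1 := (Finset.sum_eq_zero_iff_of_nonneg (fun z _ =>
      Finset.sum_nonneg (fun y _ => mul_nonneg (hnonneg z y) (sq_nonneg (f z - f y))))).mp hq
    have h2 := (Finset.sum_eq_zero_iff_of_nonneg (fun y _ =>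
      mul_nonneg (hnonneg z y) (sq_nonneg (f z - f y)))).mp (h1 z (Finset.mem_univ z))
    exact h2 y hy
  have step : ∀ {a b : V}, (SimpleGraph.fromRel (fun y z => 0 < c y z)).Adj a b → f a = f b := by
    intro a b hab
    rw [SimpleGraph.fromRel_adj] at hab
    obtain ⟨hne, hc⟩ := hab
    have hpos : 0 < c a b := by rcases hc with h | h; exact h; rwa [hsymm]
    have := hterm a b (by simp [Finset.mem_erase, Ne.symm hne])
    have h0 : (f a - f b)^2 = 0 := by
      rcases mul_eq_zero.mp this with h | h
      · exact absurd h (ne_of_gt hpos)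
      · exact h
    exact sub_eq_zero.mp (pow_eq_zero_iff (n := 2) (by norm_num) |>.mp h0)
  intro y z
  obtain ⟨w⟩ := hconn.preconnected y z
  induction w with
  | nil => rfl
  | cons hadj _ ih => exact (step hadj).trans ih

noncomputable def genMap (c : V → V → ℝ) : EuclideanSpace ℝ V →ₗ[ℝ] EuclideanSpace ℝ V where
  toFun f := WithLp.toLp 2 (negGen c f)
  map_add' f g := by
    ext z
    show negGen c (f + g) z = negGen c f z + negGen c g z
    rw [negGen, negGen, negGen, ← Finset.sum_add_distrib]
    apply Finset.sum_congr rfl; intro y _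
    have hfz : (f + g) z = f z + g z := rfl
    have hfy : (f + g) y = f y + g y := rfl
    simp only [Pi.add_apply]; ring
  map_smul' a f := by
    ext z
    show negGen c (a • f) z = a * negGen c f z
    rw [negGen, negGen, Finset.mul_sum]
    apply Finset.sum_congr rfl; intro y _
    have hfz : (a • f) z = a * f z := rfl
    have hfy : (a • f) y = a * f y := rfl
    simp only [Pi.smul_apply, smul_eq_mul]; ring

lemma genMap_symm (c : V → V → ℝ) (hsymm : ∀ y z, c y z = c z y) :
    (genMap c).IsSymmetric := by
  intro f g
  have hfg : ∀ (u w : EuclideanSpace ℝ V), (inner ℝ u w : ℝ) = ∑ z, u z * w z := by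
    intro u w
    rw [PiLp.inner_apply]
    apply Finset.sum_congr rfl; intro z _
    simp [RCLike.inner_apply, mul_comm]
  rw [hfg, hfg]
  exact bilin_symm c hsymm f g

lemma rayleigh (c : V → V → ℝ) (hsymm : ∀ y z, c y z = c z y) (lam1 : ℝ)
    (hmin : ∀ μ : ℝ, μ ≠ 0 → (∃ g : V → ℝ, g ≠ 0 ∧ ∀ z, negGen c g z = μ * g z) → lam1 ≤ μ)
    (hker : ∀ g : V → ℝ, (∀ z, negGen c g z = 0) → ∀ y z, g y = g z)
    (f : V → ℝ) (hf : ∑ z, f z = 0) :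
    lam1 * ∑ z, f z * f z ≤ ∑ z, f z * negGen c f z := by
  classical
  set T := genMap (V := V) c with hT
  have hTsym := genMap_symm c hsymm
  have hn : Module.finrank ℝ (EuclideanSpace ℝ V) = Fintype.card V := finrank_euclideanSpace
  set b := hTsym.eigenvectorBasis hn with hb
  set μ := hTsym.eigenvalues hn with hμ
  have heig : ∀ i, T (b i) = μ i • b i := fun i => hTsym.apply_eigenvectorBasis hn i
  have hinner : ∀ (u w : EuclideanSpace ℝ V), (inner ℝ u w : ℝ) = ∑ z, u z * w z := by
    intro u w
    rw [PiLp.inner_apply]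
    apply Finset.sum_congr rfl; intro z _
    simp [RCLike.inner_apply, mul_comm]
  set f' : EuclideanSpace ℝ V := WithLp.toLp 2 f with hf'
  have hTf : (inner ℝ f' (T f') : ℝ) = ∑ i, μ i * (inner ℝ (b i) f' : ℝ)^2 := by
    rw [← b.sum_inner_mul_inner f' (T f')]
    apply Finset.sum_congr rfl; intro i _
    have h1 : (inner ℝ (b i) (T f') : ℝ) = inner ℝ (T (b i)) f' := (hTsym (b i) f').symm
    rw [h1, heig i, real_inner_smul_left, real_inner_comm f' (b i)]
    ring
  have hff : (inner ℝ f' f' : ℝ) = ∑ i, (inner ℝ (b i) f' : ℝ)^2 := by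
    rw [← b.sum_inner_mul_inner f' f']
    apply Finset.sum_congr rfl; intro i _
    rw [real_inner_comm f' (b i)]; ring
  have hterm : ∀ i, lam1 * (inner ℝ (b i) f' : ℝ)^2 ≤ μ i * (inner ℝ (b i) f' : ℝ)^2 := by
    intro i
    by_cases hμi : μ i = 0
    · have hbker : ∀ z, negGen c (b i) z = 0 := by
        intro z
        have h0 : T (b i) = 0 := by rw [heig i, hμi, zero_smul]
        have h1 : negGen c (b i) z = (T (b i)) z := rfl
        rw [h1, h0]; rfl
      have hconst := hker (b i) hbker
      have hiz : (inner ℝ (b i) f' : ℝ) = 0 := by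
        rw [hinner]
        rcases isEmpty_or_nonempty V with hV | hV
        · simp
        · obtain ⟨v0⟩ := hV
          calc ∑ z, (b i : EuclideanSpace ℝ V) z * f' z
              = ∑ z, (b i : EuclideanSpace ℝ V) v0 * f z := by
                apply Finset.sum_congr rfl; intro z _; rw [hconst z v0]
            _ = (b i : EuclideanSpace ℝ V) v0 * ∑ z, f z := by rw [Finset.mul_sum]
            _ = 0 := by rw [hf, mul_zero]
      rw [hiz]; simp
    · have hle : lam1 ≤ μ i := by
        apply hmin (μ i) hμi
        refine ⟨b i, ?_, ?_⟩
        · have hne := b.orthonormal.ne_zero i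
          intro h0
          apply hne
          ext z
          exact congrFun h0 z
        · intro z
          have h1 : negGen c (b i) z = (T (b i)) z := rfl
          rw [h1, heig i]
          rfl
      exact mul_le_mul_of_nonneg_right hle (sq_nonneg _)
  have h1 : lam1 * (inner ℝ f' f' : ℝ) ≤ (inner ℝ f' (T f') : ℝ) := by
    rw [hTf, hff, Finset.mul_sum]
    exact Finset.sum_le_sum fun i _ => hterm i
  have e1 : (inner ℝ f' f' : ℝ) = ∑ z, f z * f z := hinner f' f'
  have e2 : (inner ℝ f' (T f') : ℝ) = ∑ z, f z * negGen c f z := by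
    rw [hinner]; rfl
  rw [e1, e2] at h1
  exact h1

lemma sumsq_pos {W : Type*} [Fintype W] (u : W → ℝ) (hu : u ≠ 0) :
    0 < ∑ z, u z * u z := by
  have h1 : ∃ z, u z ≠ 0 := by
    by_contra hcon
    push_neg at hcon
    exact hu (funext fun z => hcon z)
  obtain ⟨z0, hz0⟩ := h1
  apply Finset.sum_pos' (fun z _ => mul_self_nonneg (u z))
  exact ⟨z0, Finset.mem_univ z0, mul_self_pos.mpr hz0⟩

end RedNet

open RedNet in
/-- Network reduction: removing a vertex `x` and replacing the conductances by
`c̃_{yz} = c_{yz} + c_{xy} c_{xz} / ∑_{w ≠ x} c_{xw}` cannot decrease the spectral gap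
of the random walk, the gaps being the smallest nonzero eigenvalues of the respective
negative generators. -/
theorem reduced_network_gap {V : Type*} [Fintype V] [DecidableEq V]
    (c : V → V → ℝ) (hsymm : ∀ y z, c y z = c z y) (hnonneg : ∀ y z, 0 ≤ c y z)
    (hconn : (SimpleGraph.fromRel (fun y z => 0 < c y z)).Connected)
    (x : V) (hx : 0 < ∑ w ∈ univ.erase x, c x w)
    (lam1 lam1x : ℝ)
    (h1 : rwEig c lam1) (h1ne : lam1 ≠ 0)
    (h1min : ∀ mu : ℝ, mu ≠ 0 → rwEig c mu → lam1 ≤ mu)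
    (h2 : rwEig (fun y z : {v : V // v ≠ x} =>
            c y z + c x y * c x z / ∑ w ∈ univ.erase x, c x w) lam1x)
    (h2ne : lam1x ≠ 0)
    (h2min : ∀ mu : ℝ, mu ≠ 0 →
      rwEig (fun y z : {v : V // v ≠ x} =>
            c y z + c x y * c x z / ∑ w ∈ univ.erase x, c x w) mu → lam1x ≤ mu) :
    lam1 ≤ lam1x := by
  classical
  set S : ℝ := ∑ w ∈ univ.erase x, c x w with hSdef
  have hS0 : S ≠ 0 := ne_of_gt hx
  set c' : {v : V // v ≠ x} → {v : V // v ≠ x} → ℝ :=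
    fun y z => c y z + c x y * c x z / S with hc'def
  have hc'symm : ∀ y z, c' y z = c' z y := by
    intro y z; simp only [hc'def, hsymm (y : V) z, hsymm x y, hsymm x z]
    rw [hsymm (z:V) y]
    ring
  have hc'nonneg : ∀ y z, 0 ≤ c' y z := by
    intro y z
    exact add_nonneg (hnonneg _ _) (div_nonneg (mul_nonneg (hnonneg _ _) (hnonneg _ _)) (le_of_lt hx))
  -- eigenfunction of the reduced network
  obtain ⟨g, hg0, hgeig0⟩ := h2
  have hgeig : ∀ z, negGen c' g z = lam1x * g z := by
    intro z; rw [negGen_eq_neg_rwGen]; exact hgeig0 z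
  -- positivity of the two eigenvalues
  have hgsq : 0 < ∑ z, g z * g z := sumsq_pos g hg0
  have hlam1x_pos : 0 < lam1x := by
    have h0 : 0 ≤ ∑ z, g z * negGen c' g z := quadform_nonneg c' hc'symm hc'nonneg g
    have h1' : ∑ z, g z * negGen c' g z = lam1x * ∑ z, g z * g z := by
      rw [Finset.mul_sum]; apply Finset.sum_congr rfl; intro z _; rw [hgeig z]; ring
    rw [h1'] at h0
    rcases h2ne.lt_or_gt with hlt | hlt
    · nlinarith
    · exact hlt
  have hlam1_pos : 0 < lam1 := by
    obtain ⟨g1, hg10, hg1eig0⟩ := h1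
    have hq : 0 ≤ ∑ z, g1 z * negGen c g1 z := quadform_nonneg c hsymm hnonneg g1
    have hsq := sumsq_pos g1 hg10
    have heq : ∑ z, g1 z * negGen c g1 z = lam1 * ∑ z, g1 z * g1 z := by
      rw [Finset.mul_sum]; apply Finset.sum_congr rfl; intro z _
      rw [negGen_eq_neg_rwGen, hg1eig0 z]; ring
    rw [heq] at hq
    rcases h1ne.lt_or_gt with hlt | hlt
    · nlinarith
    · exact hlt
  -- extension of g to V
  have hmemiff : ∀ v : V, v ∈ univ.erase x ↔ v ≠ x := by intro v; simp
  have hsub : ∀ F : V → ℝ, ∑ w ∈ univ.erase x, F w = ∑ w : {v : V // v ≠ x}, F w :=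
    fun F => Finset.sum_subtype _ hmemiff F
  set t : ℝ := (∑ w : {v : V // v ≠ x}, c x w * g w) / S with htdef
  set h : V → ℝ := fun v => if hv : v = x then t else g ⟨v, hv⟩ with hhdef
  have hhx : h x = t := by simp [hhdef]
  have hhy : ∀ (y : V) (hy : y ≠ x), h y = g ⟨y, hy⟩ := by
    intro y hy; simp [hhdef, hy]
  have hsubS : ∑ w : {v : V // v ≠ x}, c x w = S := (hsub (fun w => c x w)).symm
  have hsubT : ∑ w : {v : V // v ≠ x}, c x w * g w = S * t := by
    rw [htdef, mul_div_cancel₀ _ hS0]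
  -- the extension kills the generator at x
  have keyx : negGen c h x = 0 := by
    have e1 : negGen c h x = ∑ w ∈ univ.erase x, c x w * (t - h w) := by
      rw [negGen]; apply Finset.sum_congr rfl; intro w hw; rw [hhx]
    rw [e1, hsub (fun w => c x w * (t - h w))]
    have e2 : ∀ w0 : {v : V // v ≠ x}, c x w0 * (t - h w0) = c x w0 * t - c x w0 * g w0 := by
      intro w0; rw [hhy w0.1 w0.2]; ring
    simp_rw [e2]
    rw [Finset.sum_sub_distrib, ← Finset.sum_mul, hsubS, hsubT]
    ring
  -- the extension is an eigenfunction away from x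
  have keyy : ∀ y0 : {v : V // v ≠ x}, negGen c h (y0 : V) = lam1x * g y0 := by
    rintro ⟨y, hy⟩
    have hx_mem : x ∈ univ.erase y := by simp [Ne.symm hy]
    have split1 : negGen c h y
        = (∑ z ∈ (univ.erase y).erase x, c y z * (h y - h z)) + c y x * (h y - t) := by
      rw [negGen, ← Finset.sum_erase_add (univ.erase y) _ hx_mem, hhx]
    have hy_mem : y ∈ univ.erase x := by simp [hy]
    have split2 : ∑ z ∈ (univ.erase y).erase x, c y z * (h y - h z)
        = (∑ z ∈ univ.erase x, c y z * (h y - h z)) - c y y * (h y - h y) := by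
      rw [Finset.erase_right_comm]
      rw [← Finset.sum_erase_add (univ.erase x) _ hy_mem]
      ring
    have split3 : ∑ z ∈ univ.erase x, c y z * (h y - h z)
        = ∑ z0 : {v : V // v ≠ x}, c y z0 * (g ⟨y, hy⟩ - g z0) := by
      rw [hsub (fun z => c y z * (h y - h z))]
      apply Finset.sum_congr rfl; intro z0 _
      rw [hhy y hy, hhy z0.1 z0.2]
    have sA : ∑ z0 : {v : V // v ≠ x}, (c x y * c x z0 / S) * (g ⟨y, hy⟩ - g z0)
        = c x y * (g ⟨y, hy⟩ - t) := by
      have e : ∀ z0 : {v : V // v ≠ x}, (c x y * c x z0 / S) * (g ⟨y, hy⟩ - g z0)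
          = (c x y / S) * (c x z0 * g ⟨y, hy⟩) - (c x y / S) * (c x z0 * g z0) := by
        intro z0; field_simp
      simp_rw [e]
      rw [Finset.sum_sub_distrib, ← Finset.mul_sum, ← Finset.mul_sum, ← Finset.sum_mul,
        hsubS, hsubT]
      field_simp
    have expand : negGen c' g ⟨y, hy⟩
        = ∑ z0 : {v : V // v ≠ x}, c' ⟨y, hy⟩ z0 * (g ⟨y, hy⟩ - g z0) := by
      rw [negGen, ← Finset.sum_erase_add univ _ (Finset.mem_univ (⟨y, hy⟩ : {v : V // v ≠ x}))]
      simp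
    have csplit : ∑ z0 : {v : V // v ≠ x}, c' ⟨y, hy⟩ z0 * (g ⟨y, hy⟩ - g z0)
        = (∑ z0 : {v : V // v ≠ x}, c y z0 * (g ⟨y, hy⟩ - g z0))
          + ∑ z0 : {v : V // v ≠ x}, (c x y * c x z0 / S) * (g ⟨y, hy⟩ - g z0) := by
      rw [← Finset.sum_add_distrib]
      apply Finset.sum_congr rfl; intro z0 _
      simp only [hc'def]; ring
    have heq := hgeig ⟨y, hy⟩
    rw [expand, csplit, sA] at heq
    rw [split1, split2, split3, hhy y hy, hsymm y x]
    rw [← heq]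
    ring
  -- the reduced eigenfunction sums to zero
  have hsum_negGen : ∑ z, negGen c h z = 0 := by
    have hz1 : ∀ z, negGen c (fun _ => (1 : ℝ)) z = 0 := by
      intro z; rw [negGen]; apply Finset.sum_eq_zero; intro y _; simp
    have hb := bilin_symm c hsymm h (fun _ => (1 : ℝ))
    simp only [hz1, mul_one, mul_zero, Finset.sum_const_zero] at hb
    exact hb
  have hsum_g : ∑ z0 : {v : V // v ≠ x}, g z0 = 0 := by
    have e1 : ∑ z, negGen c h z
        = (∑ z ∈ univ.erase x, negGen c h z) + negGen c h x :=
      (Finset.sum_erase_add univ _ (Finset.mem_univ x)).symm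
    rw [hsum_negGen, keyx, add_zero, hsub (fun z => negGen c h z)] at e1
    have e2 : ∑ z0 : {v : V // v ≠ x}, negGen c h z0 = lam1x * ∑ z0 : {v : V // v ≠ x}, g z0 := by
      rw [Finset.mul_sum]; apply Finset.sum_congr rfl; intro z0 _; rw [keyy z0]
    rw [e2] at e1
    rcases mul_eq_zero.mp e1.symm with hc0 | hc0
    · exact absurd hc0 h2ne
    · exact hc0
  -- the centered extension
  have hVne : Nonempty V := ⟨x⟩
  have hn0 : (0 : ℝ) < (Fintype.card V : ℝ) := by
    exact_mod_cast Fintype.card_pos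
  set m : ℝ := (∑ z, h z) / (Fintype.card V : ℝ) with hmdef
  set f : V → ℝ := fun v => h v - m with hfdef
  have hfsum : ∑ z, f z = 0 := by
    simp only [hfdef, Finset.sum_sub_distrib, Finset.sum_const, Finset.card_univ, nsmul_eq_mul,
      hmdef]
    rw [mul_div_cancel₀ _ (ne_of_gt hn0)]
    ring
  have hfg : ∀ z, negGen c f z = negGen c h z := by
    intro z; rw [negGen, negGen]; apply Finset.sum_congr rfl; intro y _
    simp only [hfdef]; ring
  -- Rayleigh bound
  have hray := rayleigh c hsymm lam1
    (fun μ hμ hex => by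
      obtain ⟨g', hg'0, hg'e⟩ := hex
      exact h1min μ hμ ⟨g', hg'0, fun z => by rw [← negGen_eq_neg_rwGen]; exact hg'e z⟩)
    (kernel_const c hsymm hnonneg hconn) f hfsum
  -- evaluate the right-hand side
  have hRHS : ∑ z, f z * negGen c f z = lam1x * ∑ z0 : {v : V // v ≠ x}, g z0 * g z0 := by
    have e0 : ∑ z, f z * negGen c f z = ∑ z, f z * negGen c h z := by
      apply Finset.sum_congr rfl; intro z _; rw [hfg z]
    have e1 : ∑ z, f z * negGen c h z
        = (∑ z ∈ univ.erase x, f z * negGen c h z) + f x * negGen c h x :=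
      (Finset.sum_erase_add univ _ (Finset.mem_univ x)).symm
    rw [e0, e1, keyx, mul_zero, add_zero, hsub (fun z => f z * negGen c h z)]
    have e2 : ∀ z0 : {v : V // v ≠ x}, f z0 * negGen c h z0 = (g z0 - m) * (lam1x * g z0) := by
      intro z0
      rw [keyy z0]
      simp only [hfdef]
      rw [hhy z0.1 z0.2]
    simp_rw [e2]
    have e3 : ∀ z0 : {v : V // v ≠ x}, (g z0 - m) * (lam1x * g z0)
        = lam1x * (g z0 * g z0) - lam1x * m * g z0 := by intro z0; ring
    simp_rw [e3]
    rw [Finset.sum_sub_distrib, ← Finset.mul_sum, ← Finset.mul_sum, hsum_g]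
    ring
  -- bound the left-hand side
  have hLHS : ∑ z0 : {v : V // v ≠ x}, g z0 * g z0 ≤ ∑ z, f z * f z := by
    have e1 : ∑ z, f z * f z
        = (∑ z ∈ univ.erase x, f z * f z) + f x * f x :=
      (Finset.sum_erase_add univ _ (Finset.mem_univ x)).symm
    rw [e1, hsub (fun z => f z * f z)]
    have e2 : ∀ z0 : {v : V // v ≠ x}, f z0 * f z0
        = g z0 * g z0 - 2 * m * g z0 + m * m := by
      intro z0; simp only [hfdef]; rw [hhy z0.1 z0.2]; ring
    simp_rw [e2]
    rw [Finset.sum_add_distrib, Finset.sum_sub_distrib, ← Finset.mul_sum, hsum_g,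
      Finset.sum_const, Finset.card_univ, nsmul_eq_mul]
    have hcard : (0 : ℝ) ≤ (Fintype.card {v : V // v ≠ x} : ℝ) := by positivity
    nlinarith [mul_self_nonneg (f x), mul_self_nonneg m]
  -- conclude
  have chain : lam1 * ∑ z0 : {v : V // v ≠ x}, g z0 * g z0
      ≤ lam1x * ∑ z0 : {v : V // v ≠ x}, g z0 * g z0 := by
    calc lam1 * ∑ z0 : {v : V // v ≠ x}, g z0 * g z0
        ≤ lam1 * ∑ z, f z * f z := mul_le_mul_of_nonneg_left hLHS (le_of_lt hlam1_pos)
      _ ≤ ∑ z, f z * negGen c f z := hray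
      _ = lam1x * ∑ z0 : {v : V // v ≠ x}, g z0 * g z0 := hRHS
  nlinarith [chain, hgsq]
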